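/- Let G = ⟨g₁, g₂⟩ ⊂ (ℂ*)⁵ where g₁ = (1,ξ,ξ,ξ,ξ²), g₂ = (ξ,1,ξ,ξ²,ξ) with ξ = e^{2πi/3}, and let G' = ⟨g₁', g₂'⟩ with g₁' = (1,ξ,ξ,ξ,ξ), g₂' = (ξ,1,ξ,ξ²,ξ²). Then no automorphism of (ℂ*)⁵ given by coordinatewise scaling combined with permutation of the five coordinates conjugates G to G'. -/

import Mathlib

open Complex

/-- `ξ = e^{2πi/3}`. -/
noncomputable def xi3 : ℂ := Complex.exp (2 * Real.pi * Complex.I / 3)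

/-- `ξ` as a unit of `ℂ`. -/
noncomputable def xiu : ℂˣ := Units.mk0 xi3 (Complex.exp_ne_zero _)

/-- `G = ⟨(1,ξ,ξ,ξ,ξ²), (ξ,1,ξ,ξ²,ξ)⟩ ⊂ (ℂ*)⁵`. -/
noncomputable def Gdiag : Set (Fin 5 → ℂˣ) :=
  {g | ∃ m k : ℤ, g = (![1, xiu, xiu, xiu, xiu ^ 2] : Fin 5 → ℂˣ) ^ m *
    (![xiu, 1, xiu, xiu ^ 2, xiu] : Fin 5 → ℂˣ) ^ k}

/-- `G' = ⟨(1,ξ,ξ,ξ,ξ), (ξ,1,ξ,ξ²,ξ²)⟩ ⊂ (ℂ*)⁵`. -/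
noncomputable def Gdiag' : Set (Fin 5 → ℂˣ) :=
  {g | ∃ m k : ℤ, g = (![1, xiu, xiu, xiu, xiu] : Fin 5 → ℂˣ) ^ m *
    (![xiu, 1, xiu, xiu ^ 2, xiu ^ 2] : Fin 5 → ℂˣ) ^ k}

lemma hprim : IsPrimitiveRoot xi3 3 := by
  have := Complex.isPrimitiveRoot_exp 3 (by norm_num)
  simpa [xi3] using this

lemma h1 : xi3 ≠ 1 := hprim.ne_one (by norm_num)

lemma h2 : xi3 ^ 2 ≠ 1 := hprim.pow_ne_one_of_pos_of_lt (by norm_num) (by norm_num)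

lemma h3 : xi3 ≠ xi3 ^ 2 := by
  intro h
  have hx : xi3 ≠ 0 := Complex.exp_ne_zero _
  apply h1.symm
  have : xi3 * 1 = xi3 * xi3 := by rw [mul_one, ← pow_two]; exact h
  exact mul_left_cancel₀ hx this

lemma hu1 : xiu ≠ 1 := by
  intro h; exact h1 (by simpa [show (xiu : ℂ) = xi3 from rfl] using congrArg Units.val h)

lemma hu2 : xiu ^ 2 ≠ 1 := by
  intro h; exact h2 (by simpa [show (xiu : ℂ) = xi3 from rfl] using congrArg Units.val h)

lemma hu3 : xiu ≠ xiu ^ 2 := by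
  intro h; exact h3 (by simpa [show (xiu : ℂ) = xi3 from rfl] using congrArg Units.val h)

/-- every element of `Gdiag'` has equal 4th and 5th coordinates -/
lemma coord34 {x : Fin 5 → ℂˣ} (hx : x ∈ Gdiag') : x 3 = x 4 := by
  obtain ⟨m, k, rfl⟩ := hx
  simp [Pi.mul_apply, Pi.pow_apply]

/-- the two generators of `Gdiag` separate any two distinct coordinates -/
lemma separating {i j : Fin 5} (hij : i ≠ j) :
    (![1, xiu, xiu, xiu, xiu ^ 2] : Fin 5 → ℂˣ) i ≠ ![1, xiu, xiu, xiu, xiu ^ 2] j ∨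
    (![xiu, 1, xiu, xiu ^ 2, xiu] : Fin 5 → ℂˣ) i ≠ ![xiu, 1, xiu, xiu ^ 2, xiu] j := by
  have a1 := hu1
  have a2 := hu2
  have a3 := hu3
  fin_cases i <;> fin_cases j <;>
    simp_all [Ne, eq_comm]

/-- no automorphism of `(ℂ*)⁵` given by coordinatewise scaling combined
with a permutation of the five coordinates conjugates `G` to `G'`. -/
theorem stmt19 :
    ¬ ∃ (σ : Equiv.Perm (Fin 5)) (t : Fin 5 → ℂˣ),
      (fun g : Fin 5 → ℂˣ => t * (fun i => g (σ i)) * t⁻¹) '' Gdiag = Gdiag' := by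
  rintro ⟨σ, t, h⟩
  have hconj : ∀ g : Fin 5 → ℂˣ, t * (fun i => g (σ i)) * t⁻¹ = fun i => g (σ i) := by
    intro g
    rw [mul_comm t, mul_inv_cancel_right]
  -- both generators of Gdiag give members of Gdiag' after permutation
  have mem1 : (fun i => (![1, xiu, xiu, xiu, xiu ^ 2] : Fin 5 → ℂˣ) (σ i)) ∈ Gdiag' := by
    rw [← h, ← hconj]
    exact ⟨_, ⟨1, 0, by simp⟩, rfl⟩
  have mem2 : (fun i => (![xiu, 1, xiu, xiu ^ 2, xiu] : Fin 5 → ℂˣ) (σ i)) ∈ Gdiag' := by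
    rw [← h, ← hconj]
    exact ⟨_, ⟨0, 1, by simp⟩, rfl⟩
  have e1 := coord34 mem1
  have e2 := coord34 mem2
  have hne : σ 3 ≠ σ 4 := fun hc => by simpa using σ.injective hc
  rcases separating hne with hc | hc
  · exact hc e1
  · exact hc e2
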